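/- Let A ∈ (0,1), γ ∈ (0,1), |ψ⟩ = √((1+A)/2)|01⟩ + i√((1−A)/2)|10⟩, ρ = |ψ⟩⟨ψ|, and let ε = ε_AD ⊗ ε_AD be the two-qubit amplitude damping channel with Kraus operators Mₐ ⊗ M_b (a,b ∈ {0,1}), where M₀ = diag(1, √(1−γ)) and M₁ = [[0, √γ],[0,0]]. Then F_r(ρ) − F_r(ε(ρ)) = −((1+A)/2)log₂(1+A) − ((1−A)/2)log₂(1−A) − (1−γ)log₂(1−γ) + γ + ((1−γ)(1+A)/2)·log₂((1−γ)(1+A)) + ((1−γ)(1−A)/2)·log₂((1−γ)(1−A)). -/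

import Mathlib

open Matrix Kronecker BigOperators
open scoped ComplexOrder

set_option maxHeartbeats 2000000

noncomputable section

/-- A density matrix: positive semidefinite with trace 1. -/
def IsDensityMatrix {n : Type*} [Fintype n] [DecidableEq n] (ρ : Matrix n n ℂ) : Prop :=
  ρ.PosSemidef ∧ ρ.trace = 1

/-- The l₁-norm imaginarity measure: sum of |Im ρᵢⱼ| over off-diagonal entries. -/
noncomputable def Fl1 {n : Type*} [Fintype n] [DecidableEq n] (ρ : Matrix n n ℂ) : ℝ :=
  ∑ i, ∑ j, if i = j then 0 else |(ρ i j).im|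

/-- The trace norm ‖M‖₁ = Tr √(M†M). -/
noncomputable def traceNorm {n : Type*} [Fintype n] [DecidableEq n] (M : Matrix n n ℂ) : ℝ :=
  (((Matrix.posSemidef_conjTranspose_mul_self M).1.eigenvectorUnitary.1 *
    diagonal ((fun x : ℝ => (x : ℂ)) ∘ (Real.sqrt ·) ∘ (Matrix.posSemidef_conjTranspose_mul_self M).1.eigenvalues) *
    (star (Matrix.posSemidef_conjTranspose_mul_self M).1.eigenvectorUnitary :
      Matrix n n ℂ)).trace).re

/-- The robustness of imaginarity: (1/2)‖ρ − ρᵀ‖₁. -/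
noncomputable def FR {n : Type*} [Fintype n] [DecidableEq n] (ρ : Matrix n n ℂ) : ℝ :=
  traceNorm (ρ - ρᵀ) / 2

/-- Von Neumann entropy (base-2), via eigenvalues of a Hermitian matrix
(junk value 0 if not Hermitian). -/
noncomputable def vnEntropy {n : Type*} [Fintype n] [DecidableEq n] (σ : Matrix n n ℂ) : ℝ :=
  if h : σ.IsHermitian then -∑ j, (h.eigenvalues j) * Real.logb 2 (h.eigenvalues j) else 0

/-- The relative entropy of imaginarity: S(Re ρ) − S(ρ), Re ρ = (ρ + ρᵀ)/2. -/
noncomputable def Fr {n : Type*} [Fintype n] [DecidableEq n] (ρ : Matrix n n ℂ) : ℝ :=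
  vnEntropy ((1/2 : ℂ) • (ρ + ρᵀ)) - vnEntropy ρ

/-- The canonical single-qubit state ρ_A. -/
noncomputable def rhoA (A : ℝ) : Matrix (Fin 2) (Fin 2) ℂ :=
  !![(((1 + A) / 2 : ℝ) : ℂ), -(Complex.I / 2) * (Real.sqrt (1 - A ^ 2) : ℂ);
     (Complex.I / 2) * (Real.sqrt (1 - A ^ 2) : ℂ), (((1 - A) / 2 : ℝ) : ℂ)]

/-- Density matrix of the maximal imaginary state |+⟩ = (|0⟩ + i|1⟩)/√2. -/
noncomputable def Mplus : Matrix (Fin 2) (Fin 2) ℂ :=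
  (1/2 : ℂ) • !![1, -Complex.I; Complex.I, 1]

/-- The dual-rail two-qubit state √((1+A)/2)|01⟩ + i√((1−A)/2)|10⟩. -/
noncomputable def dualRail (A : ℝ) : Fin 2 × Fin 2 → ℂ := fun q =>
  if q = ((0 : Fin 2), (1 : Fin 2)) then (Real.sqrt ((1 + A) / 2) : ℂ)
  else if q = ((1 : Fin 2), (0 : Fin 2)) then Complex.I * (Real.sqrt ((1 - A) / 2) : ℂ)
  else 0

/-- Single-qubit amplitude damping Kraus operators. -/
noncomputable def adKraus (γ : ℝ) : Fin 2 → Matrix (Fin 2) (Fin 2) ℂ :=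
  ![!![1, 0; 0, (Real.sqrt (1 - γ) : ℂ)], !![0, (Real.sqrt γ : ℂ); 0, 0]]

/-- The two-qubit channel ε_AD ⊗ ε_AD. -/
noncomputable def adTensor (γ : ℝ) (ρ : Matrix (Fin 2 × Fin 2) (Fin 2 × Fin 2) ℂ) :
    Matrix (Fin 2 × Fin 2) (Fin 2 × Fin 2) ℂ :=
  ∑ a : Fin 2, ∑ b : Fin 2,
    (adKraus γ a ⊗ₖ adKraus γ b) * ρ * (adKraus γ a ⊗ₖ adKraus γ b)ᴴ


/- ===== auxiliary machinery ===== -/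

open Polynomial in
lemma aux_charmatrix_diag {n : Type*} [Fintype n] [DecidableEq n] (d : n → ℂ) :
    charmatrix (Matrix.diagonal d) = Matrix.diagonal (fun i => X - C (d i)) := by
  ext i j
  rcases eq_or_ne i j with h | h
  · subst h; simp
  · simp [h, Matrix.diagonal_apply_ne _ h]

open Polynomial in
lemma aux_charpoly_conj_diag {n : Type*} [Fintype n] [DecidableEq n]
    (U : Matrix n n ℂ) (d : n → ℂ) (hU : U * Uᴴ = 1) :
    (U * Matrix.diagonal d * Uᴴ).charpoly = ∏ i, (X - C (d i)) := by
  have hU' : Uᴴ * U = 1 := mul_eq_one_comm.mp hU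
  have hmapU : (U * Uᴴ).map (C : ℂ →+* ℂ[X]) = 1 := by
    rw [hU, Matrix.map_one _ (map_zero C) (map_one C)]
  have hmapU' : (Uᴴ * U).map (C : ℂ →+* ℂ[X]) = 1 := by
    rw [hU', Matrix.map_one _ (map_zero C) (map_one C)]
  have key : charmatrix (U * Matrix.diagonal d * Uᴴ) =
      (U.map C) * charmatrix (Matrix.diagonal d) * (Uᴴ.map C) := by
    unfold charmatrix
    simp only [RingHom.mapMatrix_apply]
    rw [mul_sub, sub_mul]
    congr 1
    · have hs : Matrix.scalar n (X : ℂ[X]) = (X : ℂ[X]) • 1 := by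
        rw [Matrix.smul_one_eq_diagonal]; rfl
      rw [hs, mul_smul_comm, smul_mul_assoc, mul_one, ← Matrix.map_mul, hmapU]
    · rw [← Matrix.map_mul, ← Matrix.map_mul]
  rw [Matrix.charpoly, key, Matrix.det_mul, Matrix.det_mul, aux_charmatrix_diag,
    Matrix.det_diagonal, mul_comm (U.map C).det, mul_assoc, ← Matrix.det_mul, ← Matrix.map_mul,
    hmapU, Matrix.det_one, mul_one]

open Polynomial in
lemma aux_sum_f_eigen {n : Type*} [Fintype n] [DecidableEq n] {σ : Matrix n n ℂ}
    (h : σ.IsHermitian) (d : n → ℝ)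
    (hc : σ.charpoly = ∏ i, (X - C ((d i : ℂ)))) (f : ℝ → ℝ) :
    ∑ j, f (h.eigenvalues j) = ∑ i, f (d i) := by
  have hU : (h.eigenvectorUnitary : Matrix n n ℂ) * (h.eigenvectorUnitary : Matrix n n ℂ)ᴴ = 1 := by
    simpa [Matrix.star_eq_conjTranspose] using
      (Matrix.mem_unitaryGroup_iff).mp h.eigenvectorUnitary.2
  have hc2 : σ.charpoly = ∏ i, (X - C ((h.eigenvalues i : ℂ))) := by
    have hst := congrArg Matrix.charpoly h.spectral_theorem
    rw [Unitary.conjStarAlgAut_apply, Matrix.star_eq_conjTranspose] at hst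
    rw [hst, aux_charpoly_conj_diag _ _ hU]
    rfl
  have hroots : (Finset.univ.val.map fun i => ((h.eigenvalues i : ℂ))) =
      (Finset.univ.val.map fun i => ((d i : ℂ))) := by
    have h1 := congrArg Polynomial.roots (hc2.symm.trans hc)
    rwa [show (∏ i, (X - C ((h.eigenvalues i : ℂ)))) =
        ((Finset.univ.val.map fun i => ((h.eigenvalues i : ℂ))).map fun a => X - C a).prod by
          rw [Multiset.map_map]; rfl,
      show (∏ i, (X - C ((d i : ℂ)))) =
        ((Finset.univ.val.map fun i => ((d i : ℂ))).map fun a => X - C a).prod by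
          rw [Multiset.map_map]; rfl,
      Polynomial.roots_multiset_prod_X_sub_C, Polynomial.roots_multiset_prod_X_sub_C] at h1
  have h2 := congrArg (Multiset.map (fun z : ℂ => f z.re)) hroots
  rw [Multiset.map_map, Multiset.map_map] at h2
  simp only [Function.comp, Complex.ofReal_re] at h2
  have h3 := congrArg Multiset.sum h2
  rw [Finset.sum_eq_multiset_sum, Finset.sum_eq_multiset_sum]
  exact h3

lemma aux_vnEntropy_conj_diag {n : Type*} [Fintype n] [DecidableEq n]
    (U : Matrix n n ℂ) (σ : Matrix n n ℂ) (d : n → ℝ)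
    (hU : U * Uᴴ = 1) (hσ : σ = U * Matrix.diagonal (fun i => ((d i : ℝ) : ℂ)) * Uᴴ) :
    vnEntropy σ = -∑ i, d i * Real.logb 2 (d i) := by
  have hD : (Matrix.diagonal (fun i => ((d i : ℝ) : ℂ)))ᴴ
      = Matrix.diagonal (fun i => ((d i : ℝ) : ℂ)) := by
    ext i j
    rcases eq_or_ne i j with h | h
    · subst h
      simp [Matrix.conjTranspose_apply, Complex.conj_ofReal]
    · simp [Matrix.conjTranspose_apply, Matrix.diagonal_apply_ne, h, Ne.symm h]
  have hherm : σ.IsHermitian := by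
    rw [hσ]
    unfold Matrix.IsHermitian
    rw [Matrix.conjTranspose_mul, Matrix.conjTranspose_mul, Matrix.conjTranspose_conjTranspose,
      hD, Matrix.mul_assoc]
  have hc : σ.charpoly = ∏ i, (Polynomial.X - Polynomial.C ((d i : ℂ))) := by
    rw [hσ]; exact aux_charpoly_conj_diag U _ hU
  unfold vnEntropy
  rw [dif_pos hherm]
  exact neg_inj.mpr (aux_sum_f_eigen hherm d hc (fun x => x * Real.logb 2 x))

/-- general diagonal weight pattern on `Fin 2 × Fin 2`. -/
def dg (x p q : ℝ) : Fin 2 × Fin 2 → ℝ := fun i =>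
  if i = ((0 : Fin 2), (0 : Fin 2)) then x
  else if i = ((0 : Fin 2), (1 : Fin 2)) then p
  else if i = ((1 : Fin 2), (0 : Fin 2)) then q
  else 0

lemma aux_sum_dg (x p q : ℝ) :
    ∑ i : Fin 2 × Fin 2, dg x p q i * Real.logb 2 (dg x p q i)
      = x * Real.logb 2 x + p * Real.logb 2 p + q * Real.logb 2 q := by
  rw [Fintype.sum_prod_type]
  simp (config := { decide := true }) [dg, Fin.sum_univ_two, -Prod.mk_zero_zero,
    -Prod.mk_one_one, Prod.mk.injEq]
  try ring

/-- eigenvector matrix for the dual-rail state. -/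
noncomputable def myU (a b : ℝ) : Matrix (Fin 2 × Fin 2) (Fin 2 × Fin 2) ℂ := Matrix.of fun i j =>
  if j = ((0:Fin 2),(0:Fin 2)) then (if i = ((0:Fin 2),(0:Fin 2)) then 1 else 0)
  else if j = ((0:Fin 2),(1:Fin 2)) then
    (if i = ((0:Fin 2),(1:Fin 2)) then (a:ℂ)
     else if i = ((1:Fin 2),(0:Fin 2)) then Complex.I * b else 0)
  else if j = ((1:Fin 2),(0:Fin 2)) then
    (if i = ((0:Fin 2),(1:Fin 2)) then Complex.I * b
     else if i = ((1:Fin 2),(0:Fin 2)) then (a:ℂ) else 0)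
  else (if i = ((1:Fin 2),(1:Fin 2)) then 1 else 0)

/-- explicit image of the dual-rail state under the AD⊗AD channel. -/
noncomputable def Emat (a b g s : ℝ) : Matrix (Fin 2 × Fin 2) (Fin 2 × Fin 2) ℂ :=
  Matrix.of fun i j =>
  if i = ((0:Fin 2),(0:Fin 2)) then (if j = ((0:Fin 2),(0:Fin 2)) then (s:ℂ)*s else 0)
  else if i = ((0:Fin 2),(1:Fin 2)) then
    (if j = ((0:Fin 2),(1:Fin 2)) then (g:ℂ)*g*(a*a)
     else if j = ((1:Fin 2),(0:Fin 2)) then -(Complex.I) * ((g:ℂ)*g*(a*b)) else 0)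
  else if i = ((1:Fin 2),(0:Fin 2)) then
    (if j = ((0:Fin 2),(1:Fin 2)) then Complex.I * ((g:ℂ)*g*(a*b))
     else if j = ((1:Fin 2),(0:Fin 2)) then (g:ℂ)*g*(b*b) else 0)
  else 0

section claims

variable {A γ a b g s : ℝ}

lemma aux_cU (habC : (a:ℂ)*a + (b:ℂ)*b = 1) : (myU a b) * (myU a b)ᴴ = 1 := by
  ext i j
  obtain ⟨i1, i2⟩ := i
  obtain ⟨j1, j2⟩ := j
  fin_cases i1 <;> fin_cases i2 <;> fin_cases j1 <;> fin_cases j2 <;>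
    simp (config := { decide := true })
      [myU, Matrix.mul_apply, Fintype.sum_prod_type, Fin.sum_univ_two, Matrix.one_apply,
       -Prod.mk_zero_zero, -Prod.mk_one_one, Prod.mk.injEq, _root_.map_mul] <;>
    first
      | ring1
      | ((ring_nf; simp only [Complex.I_sq]) <;>
         first
           | ring1
           | linear_combination habC
           | linear_combination -habC)

lemma aux_rho_decomp (ha : a = Real.sqrt ((1 + A) / 2)) (hb : b = Real.sqrt ((1 - A) / 2)) :
    (Matrix.of fun i j => dualRail A i * (starRingEnd ℂ) (dualRail A j))
      = myU a b * Matrix.diagonal (fun i => ((dg 0 1 0 i : ℝ) : ℂ)) * (myU a b)ᴴ := by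
  ext i j
  obtain ⟨i1, i2⟩ := i
  obtain ⟨j1, j2⟩ := j
  fin_cases i1 <;> fin_cases i2 <;> fin_cases j1 <;> fin_cases j2 <;>
    simp (config := { decide := true })
      [myU, dg, dualRail, Matrix.mul_apply, Matrix.diagonal_apply, Fintype.sum_prod_type,
       Fin.sum_univ_two, -Prod.mk_zero_zero, -Prod.mk_one_one, Prod.mk.injEq,
       _root_.map_mul, ← ha, ← hb] <;>
    first
      | ring1
      | ((ring_nf; simp only [Complex.I_sq]) <;> first | ring1)

lemma aux_adTensor_eq (ha : a = Real.sqrt ((1 + A) / 2)) (hb : b = Real.sqrt ((1 - A) / 2))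
    (hg : g = Real.sqrt (1 - γ)) (hs : s = Real.sqrt γ)
    (habC : (a:ℂ)*a + (b:ℂ)*b = 1) :
    adTensor γ (Matrix.of fun i j => dualRail A i * (starRingEnd ℂ) (dualRail A j))
      = Emat a b g s := by
  ext i j
  obtain ⟨i1, i2⟩ := i
  obtain ⟨j1, j2⟩ := j
  fin_cases i1 <;> fin_cases i2 <;> fin_cases j1 <;> fin_cases j2 <;>
    simp (config := { decide := true })
      [adTensor, adKraus, Emat, dualRail, Matrix.mul_apply, Matrix.kroneckerMap_apply,
       Fintype.sum_prod_type, Fin.sum_univ_two, -Prod.mk_zero_zero, -Prod.mk_one_one,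
       Prod.mk.injEq, _root_.map_mul, ← ha, ← hb, ← hg, ← hs] <;>
    first
      | ring1
      | ((ring_nf; simp only [Complex.I_sq]) <;>
         first
           | ring1
           | linear_combination (s:ℂ)^2 * habC
           | linear_combination -(s:ℂ)^2 * habC
           | linear_combination 2*(s:ℂ)^2 * habC
           | linear_combination habC
           | linear_combination (g:ℂ)^2 * habC)

lemma aux_E_decomp (habC : (a:ℂ)*a + (b:ℂ)*b = 1) :
    Emat a b g s
      = myU a b * Matrix.diagonal (fun i => ((dg (s*s) (g*g) 0 i : ℝ) : ℂ)) * (myU a b)ᴴ := by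
  ext i j
  obtain ⟨i1, i2⟩ := i
  obtain ⟨j1, j2⟩ := j
  fin_cases i1 <;> fin_cases i2 <;> fin_cases j1 <;> fin_cases j2 <;>
    simp (config := { decide := true })
      [myU, dg, Emat, Matrix.mul_apply, Matrix.diagonal_apply, Fintype.sum_prod_type,
       Fin.sum_univ_two, -Prod.mk_zero_zero, -Prod.mk_one_one, Prod.mk.injEq,
       _root_.map_mul, Complex.ofReal_mul] <;>
    first
      | ring1
      | ((ring_nf; simp only [Complex.I_sq]) <;>
         first
           | ring1
           | linear_combination (s:ℂ)^2 * habC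
           | linear_combination -(s:ℂ)^2 * habC
           | linear_combination (g:ℂ)^2 * habC)

lemma aux_re_rho (ha : a = Real.sqrt ((1 + A) / 2)) (hb : b = Real.sqrt ((1 - A) / 2)) :
    (1/2 : ℂ) • ((Matrix.of fun i j => dualRail A i * (starRingEnd ℂ) (dualRail A j))
        + (Matrix.of fun i j => dualRail A i * (starRingEnd ℂ) (dualRail A j))ᵀ)
      = Matrix.diagonal (fun i => ((dg 0 (a*a) (b*b) i : ℝ) : ℂ)) := by
  ext i j
  obtain ⟨i1, i2⟩ := i
  obtain ⟨j1, j2⟩ := j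
  fin_cases i1 <;> fin_cases i2 <;> fin_cases j1 <;> fin_cases j2 <;>
    simp (config := { decide := true })
      [dg, dualRail, Matrix.diagonal_apply, Matrix.smul_apply, Matrix.add_apply,
       Matrix.transpose_apply, -Prod.mk_zero_zero, -Prod.mk_one_one, Prod.mk.injEq,
       _root_.map_mul, Complex.ofReal_mul, ← ha, ← hb] <;>
    first
      | ring1
      | ((ring_nf; simp only [Complex.I_sq]) <;> first | ring1)

lemma aux_re_E :
    (1/2 : ℂ) • (Emat a b g s + (Emat a b g s)ᵀ)
      = Matrix.diagonal (fun i => ((dg (s*s) (g*g*(a*a)) (g*g*(b*b)) i : ℝ) : ℂ)) := by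
  ext i j
  obtain ⟨i1, i2⟩ := i
  obtain ⟨j1, j2⟩ := j
  fin_cases i1 <;> fin_cases i2 <;> fin_cases j1 <;> fin_cases j2 <;>
    simp (config := { decide := true })
      [dg, Emat, Matrix.diagonal_apply, Matrix.smul_apply, Matrix.add_apply,
       Matrix.transpose_apply, -Prod.mk_zero_zero, -Prod.mk_one_one, Prod.mk.injEq,
       _root_.map_mul, Complex.ofReal_mul] <;>
    first
      | ring1
      | ((ring_nf; simp only [Complex.I_sq]) <;> first | ring1)

lemma aux_vnEntropy_diag (σ : Matrix (Fin 2 × Fin 2) (Fin 2 × Fin 2) ℂ) (x p q : ℝ)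
    (hσ : σ = Matrix.diagonal (fun i => ((dg x p q i : ℝ) : ℂ))) :
    vnEntropy σ = -(x * Real.logb 2 x + p * Real.logb 2 p + q * Real.logb 2 q) := by
  rw [aux_vnEntropy_conj_diag 1 σ (dg x p q) (by simp)
    (by rw [hσ, Matrix.conjTranspose_one, Matrix.one_mul, Matrix.mul_one]), aux_sum_dg]

lemma aux_vnEntropy_conj (σ : Matrix (Fin 2 × Fin 2) (Fin 2 × Fin 2) ℂ) (x p q : ℝ)
    (hU : myU a b * (myU a b)ᴴ = 1)
    (hσ : σ = myU a b * Matrix.diagonal (fun i => ((dg x p q i : ℝ) : ℂ)) * (myU a b)ᴴ) :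
    vnEntropy σ = -(x * Real.logb 2 x + p * Real.logb 2 p + q * Real.logb 2 q) := by
  rw [aux_vnEntropy_conj_diag (myU a b) σ (dg x p q) hU hσ, aux_sum_dg]

end claims

/-- decay of the relative entropy of imaginarity for a dual-rail two-qubit
state under the amplitude damping channel. -/
theorem decay_dual_rail_ad_relEnt (A γ : ℝ) (hA0 : 0 < A) (hA1 : A < 1)
    (hγ0 : 0 < γ) (hγ1 : γ < 1) :
    Fr (Matrix.of fun i j => dualRail A i * (starRingEnd ℂ) (dualRail A j))
      - Fr (adTensor γ (Matrix.of fun i j => dualRail A i * (starRingEnd ℂ) (dualRail A j)))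
      = -((1 + A) / 2) * Real.logb 2 (1 + A) - ((1 - A) / 2) * Real.logb 2 (1 - A)
        - (1 - γ) * Real.logb 2 (1 - γ) + γ
        + ((1 - γ) * (1 + A) / 2) * Real.logb 2 ((1 - γ) * (1 + A))
        + ((1 - γ) * (1 - A) / 2) * Real.logb 2 ((1 - γ) * (1 - A)) := by
  have h1A : (0:ℝ) < 1 + A := by linarith
  have h1A' : (0:ℝ) < 1 - A := by linarith
  have hγp : (0:ℝ) < 1 - γ := by linarith
  set a := Real.sqrt ((1+A)/2) with ha
  set b := Real.sqrt ((1-A)/2) with hb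
  set g := Real.sqrt (1-γ) with hg
  set s := Real.sqrt γ with hs
  have haa : a*a = (1+A)/2 := by rw [ha]; exact Real.mul_self_sqrt (by linarith)
  have hbb : b*b = (1-A)/2 := by rw [hb]; exact Real.mul_self_sqrt (by linarith)
  have hgg : g*g = 1-γ := by rw [hg]; exact Real.mul_self_sqrt (by linarith)
  have hss : s*s = γ := by rw [hs]; exact Real.mul_self_sqrt (by linarith)
  have habR : a*a + b*b = 1 := by rw [haa, hbb]; ring
  have habC : (a:ℂ)*a + (b:ℂ)*b = 1 := by exact_mod_cast congrArg Complex.ofReal habR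
  clear_value a b g s
  have cU : myU a b * (myU a b)ᴴ = 1 := aux_cU habC
  have v1 : vnEntropy (Matrix.of fun i j => dualRail A i * (starRingEnd ℂ) (dualRail A j))
      = -((0:ℝ) * Real.logb 2 0 + 1 * Real.logb 2 1 + 0 * Real.logb 2 0) :=
    aux_vnEntropy_conj _ 0 1 0 cU (aux_rho_decomp ha hb)
  have vRe1 : vnEntropy ((1/2 : ℂ) •
        ((Matrix.of fun i j => dualRail A i * (starRingEnd ℂ) (dualRail A j))
        + (Matrix.of fun i j => dualRail A i * (starRingEnd ℂ) (dualRail A j))ᵀ))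
      = -((0:ℝ) * Real.logb 2 0 + (a*a) * Real.logb 2 (a*a) + (b*b) * Real.logb 2 (b*b)) :=
    aux_vnEntropy_diag _ 0 (a*a) (b*b) (aux_re_rho ha hb)
  have hE : adTensor γ (Matrix.of fun i j => dualRail A i * (starRingEnd ℂ) (dualRail A j))
      = Emat a b g s := aux_adTensor_eq ha hb hg hs habC
  have v2 : vnEntropy (Emat a b g s)
      = -((s*s) * Real.logb 2 (s*s) + (g*g) * Real.logb 2 (g*g) + (0:ℝ) * Real.logb 2 0) :=
    aux_vnEntropy_conj _ (s*s) (g*g) 0 cU (aux_E_decomp habC)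
  have vRe2 : vnEntropy ((1/2 : ℂ) • (Emat a b g s + (Emat a b g s)ᵀ))
      = -((s*s) * Real.logb 2 (s*s) + (g*g*(a*a)) * Real.logb 2 (g*g*(a*a))
          + (g*g*(b*b)) * Real.logb 2 (g*g*(b*b))) :=
    aux_vnEntropy_diag _ (s*s) (g*g*(a*a)) (g*g*(b*b)) aux_re_E
  simp only [Fr, hE]
  rw [v1, vRe1, v2, vRe2]
  rw [hgg, hss, haa, hbb]
  have e1 : (1-γ)*((1+A)/2) = (1-γ)*(1+A)/2 := by ring
  have e2 : (1-γ)*((1-A)/2) = (1-γ)*(1-A)/2 := by ring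
  rw [e1, e2]
  have r1 : Real.logb 2 ((1+A)/2) = Real.logb 2 (1+A) - 1 := by
    rw [Real.logb_div (ne_of_gt h1A) (by norm_num), Real.logb_self_eq_one (by norm_num)]
  have r2 : Real.logb 2 ((1-A)/2) = Real.logb 2 (1-A) - 1 := by
    rw [Real.logb_div (ne_of_gt h1A') (by norm_num), Real.logb_self_eq_one (by norm_num)]
  have r3 : Real.logb 2 ((1-γ)*(1+A)/2) = Real.logb 2 ((1-γ)*(1+A)) - 1 := by
    rw [Real.logb_div (ne_of_gt (mul_pos hγp h1A)) (by norm_num),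
      Real.logb_self_eq_one (by norm_num)]
  have r4 : Real.logb 2 ((1-γ)*(1-A)/2) = Real.logb 2 ((1-γ)*(1-A)) - 1 := by
    rw [Real.logb_div (ne_of_gt (mul_pos hγp h1A')) (by norm_num),
      Real.logb_self_eq_one (by norm_num)]
  rw [r1, r2, r3, r4]
  simp only [Real.logb_zero, Real.logb_one, mul_zero, zero_mul, mul_one, one_mul,
    add_zero, zero_add, neg_zero]
  ring
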